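/- Let ρ be a qubit density matrix (a 2×2 positive semidefinite complex matrix with trace 1), and regard each Pauli matrix σ_x, σ_y, σ_z as a unitary channel with the single Kraus operator σ_x, σ_y, σ_z respectively. Then Q_ρ(σ_x)·Q_ρ(σ_y)·Q_ρ(σ_z) ≥ (τ/8) · |tr(σ_x ρ) · tr(σ_y ρ) · tr(σ_z ρ)| with τ = 64/(3√3). -/

import Mathlib

open Matrix
open scoped ComplexOrder

noncomputable section

/-- Variance of an operator `K` with respect to a state `ρ`:
`V_ρ(K) = ½ tr((K†K + KK†)ρ) − |tr(Kρ)|²`. -/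
def opVar {d : ℕ} (ρ K : Matrix (Fin d) (Fin d) ℂ) : ℝ :=
  (((Kᴴ * K + K * Kᴴ) * ρ).trace).re / 2 - ‖(K * ρ).trace‖ ^ 2

/-- Variance of a channel with Kraus operators `K i`: `V_ρ(Φ) = Σ_i V_ρ(K_i)`. -/
def chanVar {d n : ℕ} (ρ : Matrix (Fin d) (Fin d) ℂ)
    (K : Fin n → Matrix (Fin d) (Fin d) ℂ) : ℝ :=
  ∑ i, opVar ρ (K i)

def psdSqrt {d : ℕ} {ρ : Matrix (Fin d) (Fin d) ℂ} (hρ : ρ.PosSemidef) :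
    Matrix (Fin d) (Fin d) ℂ :=
  (hρ.1.eigenvectorUnitary : Matrix (Fin d) (Fin d) ℂ) *
    diagonal ((↑) ∘ Real.sqrt ∘ hρ.1.eigenvalues) *
    (star hρ.1.eigenvectorUnitary : Matrix (Fin d) (Fin d) ℂ)

/-- Wigner–Yanase skew information of a channel with Kraus operators `K i`:
`I_ρ(Φ) = ½ Σ_i ‖[√ρ, K_i]‖_F²`, where `√ρ` is the PSD square root of `ρ`. -/
def chanSkew {d n : ℕ} (ρ : Matrix (Fin d) (Fin d) ℂ) (hρ : ρ.PosSemidef)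
    (K : Fin n → Matrix (Fin d) (Fin d) ℂ) : ℝ :=
  (1 / 2) * ∑ i,
    (((psdSqrt hρ * K i - K i * psdSqrt hρ)ᴴ * (psdSqrt hρ * K i - K i * psdSqrt hρ)).trace).re

/-- Quantum uncertainty of a channel:
`Q_ρ(Φ) = √(V_ρ(Φ)² − (V_ρ(Φ) − I_ρ(Φ))²)`. -/
def chanQ {d n : ℕ} (ρ : Matrix (Fin d) (Fin d) ℂ) (hρ : ρ.PosSemidef)
    (K : Fin n → Matrix (Fin d) (Fin d) ℂ) : ℝ :=
  Real.sqrt ((chanVar ρ K) ^ 2 - (chanVar ρ K - chanSkew ρ hρ K) ^ 2)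

/-- Pauli matrix σ_x. -/
def pauliX : Matrix (Fin 2) (Fin 2) ℂ := !![0, 1; 1, 0]

/-- Pauli matrix σ_y. -/
def pauliY : Matrix (Fin 2) (Fin 2) ℂ := !![0, -Complex.I; Complex.I, 0]

/-- Pauli matrix σ_z. -/
def pauliZ : Matrix (Fin 2) (Fin 2) ℂ := !![1, 0; 0, -1]

lemma psdSqrt_mul_self {d : ℕ} {ρ : Matrix (Fin d) (Fin d) ℂ} (hρ : ρ.PosSemidef) :
    psdSqrt hρ * psdSqrt hρ = ρ := by
  have hU : (star hρ.1.eigenvectorUnitary : Matrix (Fin d) (Fin d) ℂ) *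
      (hρ.1.eigenvectorUnitary : Matrix (Fin d) (Fin d) ℂ) = 1 :=
    Unitary.coe_star_mul_self _
  conv_rhs => rw [hρ.1.spectral_theorem, Unitary.conjStarAlgAut_apply]
  unfold psdSqrt
  simp only [mul_assoc]
  rw [← mul_assoc _ (hρ.1.eigenvectorUnitary : Matrix (Fin d) (Fin d) ℂ), hU, one_mul,
    ← mul_assoc (diagonal _), diagonal_mul_diagonal]
  congr 3
  funext i
  simp only [Function.comp_apply, RCLike.ofReal_eq_complex_ofReal, ← Complex.ofReal_mul]
  rw [Real.mul_self_sqrt (hρ.eigenvalues_nonneg i)]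

lemma psdSqrt_isHermitian {d : ℕ} {ρ : Matrix (Fin d) (Fin d) ℂ} (hρ : ρ.PosSemidef) :
    (psdSqrt hρ).IsHermitian := by
  unfold psdSqrt
  rw [star_eq_conjTranspose]
  apply isHermitian_mul_mul_conjTranspose
  apply isHermitian_diagonal_of_self_adjoint
  funext i
  simp [Complex.conj_ofReal]

set_option maxHeartbeats 2000000 in
/-- Key scalar inequality on the simplex. -/
private lemma keyP (u v w : ℝ) (hu : 0 ≤ u) (hv : 0 ≤ v) (hw : 0 ≤ w)
    (hs : u + v + w ≤ 1) :
    (v+w)*(u+w)*(u+v)*((1-u)*(1-v)*(1-w)) ≥ 64/27 * (u*v*w) := by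
  have h1 : (v+w)*(u+w)*(u+v) - 8*(u*v*w) ≥ 0 := by
    nlinarith [sq_nonneg (u-v), sq_nonneg (v-w), sq_nonneg (u-w), mul_nonneg hu hv,
      mul_nonneg hv hw, mul_nonneg hu hw]
  have ham : (v+w)*(u+w)*(u+v) ≥ 8/9*((u+v+w)*(u*v+v*w+u*w)) := by
    nlinarith [sq_nonneg (u-v), sq_nonneg (v-w), sq_nonneg (u-w), mul_nonneg hu hv,
      mul_nonneg hv hw, mul_nonneg hu hw, mul_nonneg (mul_nonneg hu hv) hw]
  have hmac : (u*v+v*w+u*w)^2 ≥ 3*(u*v*w)*(u+v+w) := by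
    nlinarith [sq_nonneg (u*v-v*w), sq_nonneg (v*w-u*w), sq_nonneg (u*v-u*w),
      mul_nonneg (mul_nonneg hu hv) hw, hu, hv, hw]
  have hF0 : (0:ℝ) ≤ (v+w)*(u+w)*(u+v) := by positivity
  have he1s : (0:ℝ) ≤ u+v+w := by positivity
  have h2 : ((v+w)*(u+w)*(u+v))^2 ≥ 64/27*(u*v*w)*(u+v+w)^3 := by
    have step : ((v+w)*(u+w)*(u+v))^2 ≥ (8/9*((u+v+w)*(u*v+v*w+u*w)))^2 := by
      have hnn : (0:ℝ) ≤ 8/9*((u+v+w)*(u*v+v*w+u*w)) := by positivity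
      nlinarith [ham, hnn]
    nlinarith [step, mul_le_mul_of_nonneg_left hmac
      (by positivity : (0:ℝ) ≤ (64/81) * (u+v+w)^2), sq_nonneg (u+v+w)]
  have he1 : (0:ℝ) ≤ 1 - (u+v+w) := by linarith
  have he3 : (0:ℝ) ≤ u*v*w := by positivity
  have hA : ((v+w)*(u+w)*(u+v) - 8*(u*v*w)) * ((1-(u+v+w))*(1+(u*v+v*w+u*w))) ≥ 0 := by
    apply mul_nonneg h1
    apply mul_nonneg he1
    nlinarith [mul_nonneg hu hv, mul_nonneg hv hw, mul_nonneg hu hw]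
  have hC : (u*v*w)*((1-(u+v+w))*(u*v+v*w+u*w)) ≥ 0 := by positivity
  have hB : (u*v*w)*((1-(u+v+w))*(8 - 64/27*(1+(u+v+w)+(u+v+w)^2))) ≥ 0 := by
    apply mul_nonneg he3
    apply mul_nonneg he1
    nlinarith [he1s, hs]
  nlinarith [h2, hA, hC, hB]

set_option maxHeartbeats 2000000 in
/-- Tight triple-product uncertainty relation for the Pauli unitary channels:
`Q_ρ(σx) Q_ρ(σy) Q_ρ(σz) ≥ (τ/8) |tr(σx ρ) tr(σy ρ) tr(σz ρ)|` with `τ = 64/(3√3)`. -/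
theorem stmt_13
    (ρ : Matrix (Fin 2) (Fin 2) ℂ) (hρ : ρ.PosSemidef) (htr : ρ.trace = 1) :
    chanQ ρ hρ ![pauliX] * chanQ ρ hρ ![pauliY] * chanQ ρ hρ ![pauliZ] ≥
      (64 / (3 * Real.sqrt 3)) / 8 *
        ‖(pauliX * ρ).trace * (pauliY * ρ).trace * (pauliZ * ρ).trace‖ := by
  set A := psdSqrt hρ with hA
  have hAA : A * A = ρ := psdSqrt_mul_self hρ
  have hH : A.IsHermitian := psdSqrt_isHermitian hρ
  set a := (A 0 0).re with ha
  set c := (A 1 1).re with hc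
  set p := (A 0 1).re with hp
  set q := (A 0 1).im with hq
  have h00 : A 0 0 = (a:ℂ) := by
    have h := hH.apply 0 0
    exact (Complex.conj_eq_iff_re.mp h).symm
  have h11 : A 1 1 = (c:ℂ) := by
    have h := hH.apply 1 1
    exact (Complex.conj_eq_iff_re.mp h).symm
  have h01 : A 0 1 = (p:ℂ) + (q:ℂ)*Complex.I := (Complex.re_add_im _).symm
  have h10 : A 1 0 = (p:ℂ) - (q:ℂ)*Complex.I := by
    rw [← hH.apply 1 0, h01]
    simp [Complex.ext_iff]
  -- trace constraint
  have htrA : (A*A).trace = ((a^2+c^2+2*p^2+2*q^2 : ℝ):ℂ) := by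
    simp [Matrix.trace_fin_two, Matrix.mul_apply, Fin.sum_univ_two,
      Matrix.conjTranspose_apply, h00, h01, h10, h11, Complex.ext_iff]
    constructor <;> (norm_cast; try ring)
  have hcon : a^2+c^2+2*p^2+2*q^2 = 1 := by
    have h := htr
    rw [← hAA, htrA] at h
    exact_mod_cast h
  -- traces of pauli * ρ
  have hx : (pauliX * ρ).trace = ((2*p*(a+c) : ℝ):ℂ) := by
    rw [← hAA]
    simp [Matrix.trace_fin_two, Matrix.mul_apply, Fin.sum_univ_two, pauliX,
      Matrix.vecMul, Matrix.vecHead, Matrix.vecTail, dotProduct,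
      h00, h01, h10, h11, Complex.ext_iff]
    constructor <;> (norm_cast; try ring)
  have hy : (pauliY * ρ).trace = ((-(2*q*(a+c)) : ℝ):ℂ) := by
    rw [← hAA]
    simp [Matrix.trace_fin_two, Matrix.mul_apply, Fin.sum_univ_two, pauliY,
      Matrix.vecMul, Matrix.vecHead, Matrix.vecTail, dotProduct,
      h00, h01, h10, h11, Complex.ext_iff]
    constructor <;> (norm_cast; try ring)
  have hz : (pauliZ * ρ).trace = ((a^2-c^2 : ℝ):ℂ) := by
    rw [← hAA]
    simp [Matrix.trace_fin_two, Matrix.mul_apply, Fin.sum_univ_two, pauliZ,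
      Matrix.vecMul, Matrix.vecHead, Matrix.vecTail, dotProduct,
      h00, h01, h10, h11, Complex.ext_iff]
    constructor <;> (norm_cast; try ring)
  -- variances
  have hTX : ((pauliXᴴ * pauliX + pauliX * pauliXᴴ) * ρ).trace
      = ((2*(a^2+c^2+2*p^2+2*q^2) : ℝ):ℂ) := by
    rw [← hAA]
    simp [Matrix.trace_fin_two, Matrix.mul_apply, Fin.sum_univ_two, pauliX,
      Matrix.conjTranspose_apply, Matrix.add_apply,
      Matrix.vecMul, Matrix.vecHead, Matrix.vecTail, dotProduct,
      h00, h01, h10, h11, Complex.ext_iff]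
    constructor <;> (norm_cast; try ring)
  have hTY : ((pauliYᴴ * pauliY + pauliY * pauliYᴴ) * ρ).trace
      = ((2*(a^2+c^2+2*p^2+2*q^2) : ℝ):ℂ) := by
    rw [← hAA]
    simp [Matrix.trace_fin_two, Matrix.mul_apply, Fin.sum_univ_two, pauliY,
      Matrix.conjTranspose_apply, Matrix.add_apply,
      Matrix.vecMul, Matrix.vecHead, Matrix.vecTail, dotProduct,
      h00, h01, h10, h11, Complex.ext_iff]
    constructor <;> (norm_cast; try ring)
  have hTZ : ((pauliZᴴ * pauliZ + pauliZ * pauliZᴴ) * ρ).trace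
      = ((2*(a^2+c^2+2*p^2+2*q^2) : ℝ):ℂ) := by
    rw [← hAA]
    simp [Matrix.trace_fin_two, Matrix.mul_apply, Fin.sum_univ_two, pauliZ,
      Matrix.conjTranspose_apply, Matrix.add_apply,
      Matrix.vecMul, Matrix.vecHead, Matrix.vecTail, dotProduct,
      h00, h01, h10, h11, Complex.ext_iff]
    constructor <;> (norm_cast; try ring)
  have hVx : chanVar ρ ![pauliX] = 1 - (2*p*(a+c))^2 := by
    simp only [chanVar, Fin.sum_univ_one, Matrix.cons_val_zero, opVar, hTX, hx]
    rw [Complex.norm_real, Real.norm_eq_abs, sq_abs, Complex.ofReal_re]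
    linear_combination hcon
  have hVy : chanVar ρ ![pauliY] = 1 - (2*q*(a+c))^2 := by
    simp only [chanVar, Fin.sum_univ_one, Matrix.cons_val_zero, opVar, hTY, hy]
    rw [Complex.norm_real, Real.norm_eq_abs, sq_abs, Complex.ofReal_re]
    linear_combination hcon
  have hVz : chanVar ρ ![pauliZ] = 1 - (a^2-c^2)^2 := by
    simp only [chanVar, Fin.sum_univ_one, Matrix.cons_val_zero, opVar, hTZ, hz]
    rw [Complex.norm_real, Real.norm_eq_abs, sq_abs, Complex.ofReal_re]
    linear_combination hcon
  -- skew informations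
  have hSX : ((A * pauliX - pauliX * A)ᴴ * (A * pauliX - pauliX * A)).trace
      = ((2*((a-c)^2+4*q^2) : ℝ):ℂ) := by
    simp [Matrix.trace_fin_two, Matrix.mul_apply, Fin.sum_univ_two, pauliX,
      Matrix.conjTranspose_apply, Matrix.sub_apply,
      Matrix.vecMul, Matrix.vecHead, Matrix.vecTail, dotProduct,
      h00, h01, h10, h11, Complex.ext_iff]
    constructor <;> (norm_cast; try ring)
  have hSY : ((A * pauliY - pauliY * A)ᴴ * (A * pauliY - pauliY * A)).trace
      = ((2*((a-c)^2+4*p^2) : ℝ):ℂ) := by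
    simp [Matrix.trace_fin_two, Matrix.mul_apply, Fin.sum_univ_two, pauliY,
      Matrix.conjTranspose_apply, Matrix.sub_apply,
      Matrix.vecMul, Matrix.vecHead, Matrix.vecTail, dotProduct,
      h00, h01, h10, h11, Complex.ext_iff]
    constructor <;> (norm_cast; try ring)
  have hSZ : ((A * pauliZ - pauliZ * A)ᴴ * (A * pauliZ - pauliZ * A)).trace
      = ((2*(4*p^2+4*q^2) : ℝ):ℂ) := by
    simp [Matrix.trace_fin_two, Matrix.mul_apply, Fin.sum_univ_two, pauliZ,
      Matrix.conjTranspose_apply, Matrix.sub_apply,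
      Matrix.vecMul, Matrix.vecHead, Matrix.vecTail, dotProduct,
      h00, h01, h10, h11, Complex.ext_iff]
    constructor <;> (norm_cast; try ring)
  have hIx : chanSkew ρ hρ ![pauliX] = (a-c)^2+4*q^2 := by
    simp only [chanSkew, Fin.sum_univ_one, Matrix.cons_val_zero, ← hA, hSX,
      Complex.ofReal_re]
    ring
  have hIy : chanSkew ρ hρ ![pauliY] = (a-c)^2+4*p^2 := by
    simp only [chanSkew, Fin.sum_univ_one, Matrix.cons_val_zero, ← hA, hSY,
      Complex.ofReal_re]
    ring
  have hIz : chanSkew ρ hρ ![pauliZ] = 4*p^2+4*q^2 := by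
    simp only [chanSkew, Fin.sum_univ_one, Matrix.cons_val_zero, ← hA, hSZ,
      Complex.ofReal_re]
    ring
  -- real reformulation
  set X := 2*p*(a+c) with hXd
  set Y := -(2*q*(a+c)) with hYd
  set Z := a^2-c^2 with hZd
  set Rx := (1 - X^2)^2 - ((1 - X^2) - ((a-c)^2+4*q^2))^2 with hRxd
  set Ry := (1 - (2*q*(a+c))^2)^2 - ((1 - (2*q*(a+c))^2) - ((a-c)^2+4*p^2))^2 with hRyd
  set Rz := (1 - Z^2)^2 - ((1 - Z^2) - (4*p^2+4*q^2))^2 with hRzd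
  have hQx : chanQ ρ hρ ![pauliX] = Real.sqrt Rx := by
    rw [chanQ, hVx, hIx]
  have hQy : chanQ ρ hρ ![pauliY] = Real.sqrt Ry := by
    rw [chanQ, hVy, hIy]
  have hQz : chanQ ρ hρ ![pauliZ] = Real.sqrt Rz := by
    rw [chanQ, hVz, hIz]
  have hYsq : Y^2 = (2*q*(a+c))^2 := by rw [hYd]; ring
  clear_value X Y Z Rx Ry Rz
  -- bounds on the radicands
  have hsum : X^2 + Y^2 + Z^2 ≤ 1 := by
    have hid : 1 - (X^2 + Y^2 + Z^2) = ((a+c)^2-1)^2 := by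
      rw [hXd, hYd, hZd]
      linear_combination (-2*(a+c)^2) * hcon
    linarith only [hid, sq_nonneg ((a+c)^2-1)]
  have hRxge : (Y^2+Z^2)*(1-X^2) ≤ Rx := by
    have hid : Rx - (Y^2+Z^2)*(1-X^2)
        = 4*p^2*((a-c)^2+4*q^2)*((a+c)^2-1)^2 := by
      rw [hRxd, hXd, hYd, hZd]
      linear_combination (-(((a-c)^2+4*q^2)*(8*p^2*(a+c)^2 + 2*(1 - (2*p*(a+c))^2)))) * hcon
    have hnn : (0:ℝ) ≤ 4*p^2*((a-c)^2+4*q^2)*((a+c)^2-1)^2 := by positivity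
    linarith only [hid, hnn]
  have hRyge : (X^2+Z^2)*(1-Y^2) ≤ Ry := by
    have hid : Ry - (X^2+Z^2)*(1-Y^2)
        = 4*q^2*((a-c)^2+4*p^2)*((a+c)^2-1)^2 := by
      rw [hRyd, hXd, hYd, hZd]
      linear_combination (-(((a-c)^2+4*p^2)*(8*q^2*(a+c)^2 + 2*(1 - (2*q*(a+c))^2)))) * hcon
    have hnn : (0:ℝ) ≤ 4*q^2*((a-c)^2+4*p^2)*((a+c)^2-1)^2 := by positivity
    linarith only [hid, hnn]
  have hRzge : (X^2+Y^2)*(1-Z^2) ≤ Rz := by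
    have hid : Rz - (X^2+Y^2)*(1-Z^2)
        = (a-c)^2*(4*p^2+4*q^2)*((a+c)^2-1)^2 := by
      rw [hRzd, hXd, hYd, hZd]
      linear_combination (-((4*p^2+4*q^2)*(2*(a-c)^2*(a+c)^2 + 2*(1 - (a^2-c^2)^2)))) * hcon
    have hnn : (0:ℝ) ≤ (a-c)^2*(4*p^2+4*q^2)*((a+c)^2-1)^2 := by positivity
    linarith only [hid, hnn]
  -- nonnegativity
  have hu : (0:ℝ) ≤ X^2 := sq_nonneg _
  have hv : (0:ℝ) ≤ Y^2 := sq_nonneg _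
  have hw : (0:ℝ) ≤ Z^2 := sq_nonneg _
  have h1u : (0:ℝ) ≤ 1 - X^2 := by linarith only [hsum, hv, hw]
  have h1v : (0:ℝ) ≤ 1 - Y^2 := by linarith only [hsum, hu, hw]
  have h1w : (0:ℝ) ≤ 1 - Z^2 := by linarith only [hsum, hu, hv]
  have hPx : (0:ℝ) ≤ (Y^2+Z^2)*(1-X^2) := mul_nonneg (by positivity) h1u
  have hPy : (0:ℝ) ≤ (X^2+Z^2)*(1-Y^2) := mul_nonneg (by positivity) h1v
  have hPz : (0:ℝ) ≤ (X^2+Y^2)*(1-Z^2) := mul_nonneg (by positivity) h1w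
  have hRx0 : (0:ℝ) ≤ Rx := le_trans hPx hRxge
  have hRy0 : (0:ℝ) ≤ Ry := le_trans hPy hRyge
  have hRz0 : (0:ℝ) ≤ Rz := le_trans hPz hRzge
  -- key simplex inequality
  have hkey := keyP (X^2) (Y^2) (Z^2) hu hv hw hsum
  -- assemble
  rw [hQx, hQy, hQz, hx, hy, hz]
  have habs : ‖(((X : ℝ):ℂ) * ((Y : ℝ):ℂ) * ((Z : ℝ):ℂ))‖
      = |X*Y*Z| := by
    rw [← Complex.ofReal_mul, ← Complex.ofReal_mul, Complex.norm_real, Real.norm_eq_abs]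
  rw [habs]
  have hsqrt3 : (Real.sqrt 3)^2 = 3 := Real.sq_sqrt (by norm_num)
  have hK0 : (0:ℝ) ≤ (64 / (3 * Real.sqrt 3)) / 8 := by positivity
  have hKsq : ((64 / (3 * Real.sqrt 3)) / 8)^2 = 64/27 := by
    rw [div_pow, div_pow, mul_pow, hsqrt3]; norm_num
  have hprod : Real.sqrt Rx * Real.sqrt Ry * Real.sqrt Rz = Real.sqrt (Rx*Ry*Rz) := by
    rw [Real.sqrt_mul (mul_nonneg hRx0 hRy0), Real.sqrt_mul hRx0]
  rw [ge_iff_le, hprod]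
  have hstep1 : ((Y^2+Z^2)*(1-X^2)) * ((X^2+Z^2)*(1-Y^2)) ≤ Rx * Ry :=
    mul_le_mul hRxge hRyge hPy hRx0
  have hstep2 : (((Y^2+Z^2)*(1-X^2)) * ((X^2+Z^2)*(1-Y^2))) * ((X^2+Y^2)*(1-Z^2))
      ≤ Rx * Ry * Rz :=
    mul_le_mul hstep1 hRzge hPz (mul_nonneg hRx0 hRy0)
  have hfinal : ((64 / (3 * Real.sqrt 3)) / 8 * |X*Y*Z|)^2 ≤ Rx*Ry*Rz := by
    have e1 : ((64 / (3 * Real.sqrt 3)) / 8 * |X*Y*Z|)^2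
        = 64/27 * (X^2*(Y^2*Z^2)) := by
      rw [mul_pow, hKsq, sq_abs]; ring
    calc ((64 / (3 * Real.sqrt 3)) / 8 * |X*Y*Z|)^2
        = 64/27 * (X^2*(Y^2*Z^2)) := e1
      _ ≤ (Y^2+Z^2)*(X^2+Z^2)*(X^2+Y^2)*((1-X^2)*(1-Y^2)*(1-Z^2)) := by
          linarith only [hkey]
      _ = (((Y^2+Z^2)*(1-X^2)) * ((X^2+Z^2)*(1-Y^2))) * ((X^2+Y^2)*(1-Z^2)) := by ring
      _ ≤ Rx * Ry * Rz := hstep2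
  calc (64 / (3 * Real.sqrt 3)) / 8 * |X*Y*Z|
      = Real.sqrt (((64 / (3 * Real.sqrt 3)) / 8 * |X*Y*Z|)^2) :=
        (Real.sqrt_sq (by positivity)).symm
    _ ≤ Real.sqrt (Rx*Ry*Rz) := Real.sqrt_le_sqrt hfinal
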